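/- Asymptotic L¹ semi-norm recovery: let γ̂ ∈ C¹([0,1], ℝ^{d-1}) and γ(s) = (s, γ̂(s)). With L_{k,l}(S(γ)) ∈ ℝ^{d-1} the vector of signature coefficients on e₁^⊗k ⊗ e_{j+1} ⊗ e₁^⊗l (j = 1,…,d−1), one has limsup_{n→∞} n! · Σ_{k=1}^{n} |L_{k, n−k}(S(γ))| = ∫₀¹ |γ̂'(s)| ds, the total variation of γ̂. -/

import Mathlib

open Set Filter intervalIntegral

noncomputable def bb (n k : ℕ) (s : ℝ) : ℝ := (n.choose k : ℝ) * s ^ k * (1 - s) ^ (n - k)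

lemma bb_cont (n k : ℕ) : Continuous (bb n k) := by
  unfold bb; continuity

lemma bb_nonneg {n k : ℕ} {s : ℝ} (hs : s ∈ Icc (0:ℝ) 1) : 0 ≤ bb n k s := by
  have h1 : (0:ℝ) ≤ s := hs.1
  have h2 : (0:ℝ) ≤ 1 - s := by linarith [hs.2]
  unfold bb; positivity

lemma sum_bb (n : ℕ) (s : ℝ) : ∑ k ∈ Finset.range (n+1), bb n k s = 1 := by
  have := congrArg (Polynomial.eval s) (bernsteinPolynomial.sum ℝ n)
  simpa [bb, Polynomial.eval_finset_sum, bernsteinPolynomial] using this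

lemma var_bb (n : ℕ) (s : ℝ) :
    ∑ k ∈ Finset.range (n+1), ((n:ℝ)*s - k)^2 * bb n k s = n * (s * (1 - s)) := by
  have := congrArg (Polynomial.eval s) (bernsteinPolynomial.variance ℝ n)
  simpa [bb, Polynomial.eval_finset_sum, bernsteinPolynomial, nsmul_eq_mul, mul_assoc,
    mul_comm, mul_left_comm] using this

lemma var_bb' {n : ℕ} (hn : 1 ≤ n) (s : ℝ) :
    ∑ k ∈ Finset.range (n+1), bb n k s * (s - k/n)^2 = s * (1 - s) / n := by
  have hn0 : (n:ℝ) ≠ 0 := by positivity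
  have : ∀ k ∈ Finset.range (n+1),
      bb n k s * (s - k/n)^2 = ((n:ℝ)*s - k)^2 * bb n k s / (n:ℝ)^2 := by
    intro k _; field_simp
  rw [Finset.sum_congr rfl this, ← Finset.sum_div, var_bb]
  field_simp

lemma contOn_intInt {G : Type*} [NormedAddCommGroup G] {g : ℝ → G}
    (hg : ContinuousOn g (Icc 0 1)) : IntervalIntegrable g MeasureTheory.volume 0 1 :=
  ContinuousOn.intervalIntegrable (by rwa [uIcc_of_le zero_le_one])

section Main
variable {E : Type*} [NormedAddCommGroup E] [NormedSpace ℝ E] [CompleteSpace E]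

lemma bern_tendsto (f : ℝ → E) (hf : ContinuousOn f (Icc 0 1)) :
    Tendsto (fun n : ℕ => ∑ k ∈ Finset.range (n+1), ‖∫ s in (0:ℝ)..1, bb n k s • f s‖)
      atTop (nhds (∫ s in (0:ℝ)..1, ‖f s‖)) := by
  have huIcc : uIcc (0:ℝ) 1 = Icc 0 1 := uIcc_of_le zero_le_one
  have hfi : IntervalIntegrable (fun s => ‖f s‖) MeasureTheory.volume 0 1 := contOn_intInt hf.norm
  have hbfc : ∀ n k, ContinuousOn (fun s => bb n k s • f s) (Icc 0 1) :=
    fun n k => ((bb_cont n k).continuousOn).smul hf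
  have hbfi : ∀ n k, IntervalIntegrable (fun s => bb n k s • f s) MeasureTheory.volume 0 1 :=
    fun n k => contOn_intInt (hbfc n k)
  have hbnfi : ∀ n k, IntervalIntegrable (fun s => bb n k s * ‖f s‖) MeasureTheory.volume 0 1 :=
    fun n k => contOn_intInt (((bb_cont n k).continuousOn).mul hf.norm)
  have hbdfi : ∀ (n k : ℕ) (t : ℝ), t ∈ Icc (0:ℝ) 1 →
      IntervalIntegrable (fun s => bb n k s * ‖f s - f t‖) MeasureTheory.volume 0 1 := by
    intro n k t ht
    exact contOn_intInt (((bb_cont n k).continuousOn).mul (hf.sub continuousOn_const).norm)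
  -- bound on f
  obtain ⟨M₀, hM₀⟩ := isCompact_Icc.exists_bound_of_continuousOn hf
  set M : ℝ := max M₀ 0 with hMdef
  have hM : ∀ x ∈ Icc (0:ℝ) 1, ‖f x‖ ≤ M := fun x hx => (hM₀ x hx).trans (le_max_left _ _)
  have hMnn : 0 ≤ M := le_max_right _ _
  -- value of ∫ bb * ‖f‖ summed
  have hIsum : ∀ n : ℕ, ∑ k ∈ Finset.range (n+1),
      (∫ s in (0:ℝ)..1, bb n k s * ‖f s‖) = ∫ s in (0:ℝ)..1, ‖f s‖ := by
    intro n
    rw [← intervalIntegral.integral_finset_sum (fun k _ => hbnfi n k)]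
    apply intervalIntegral.integral_congr
    intro s _
    dsimp only
    rw [← Finset.sum_mul, sum_bb, one_mul]
  -- per-k upper bound: S term vs I term
  have key : ∀ (n k : ℕ), k ≤ n →
      (∫ s in (0:ℝ)..1, bb n k s * ‖f s‖) - ‖∫ s in (0:ℝ)..1, bb n k s • f s‖ ≤
        2 * ∫ s in (0:ℝ)..1, bb n k s * ‖f s - f (k/n)‖ := by
    intro n k hkn
    have hkn' : (k:ℝ)/n ∈ Icc (0:ℝ) 1 := by
      rcases Nat.eq_zero_or_pos n with h | h
      · subst h; interval_cases k; simp
      constructor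
      · positivity
      · rw [div_le_one (by exact_mod_cast h)]; exact_mod_cast hkn
    set t : ℝ := (k:ℝ)/n
    set e : ℝ := ∫ s in (0:ℝ)..1, bb n k s * ‖f s - f t‖
    have hInt3 := hbdfi n k t hkn'
    -- h1 : ∫ bb ‖f‖ ≤ ∫ bb ‖f t‖ + e
    have h1 : (∫ s in (0:ℝ)..1, bb n k s * ‖f s‖) ≤
        (∫ s in (0:ℝ)..1, bb n k s * ‖f t‖) + e := by
      rw [← intervalIntegral.integral_add (f := fun s => bb n k s * ‖f t‖)
        (g := fun s => bb n k s * ‖f s - f t‖) (contOn_intInt (((bb_cont n k).continuousOn).mul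
        continuousOn_const)) hInt3]
      apply intervalIntegral.integral_mono_on zero_le_one (hbnfi n k)
        ((contOn_intInt (((bb_cont n k).continuousOn).mul continuousOn_const)).add hInt3)
      intro s hs
      have : ‖f s‖ ≤ ‖f t‖ + ‖f s - f t‖ := by
        have := norm_sub_norm_le (f s) (f t); linarith [abs_le.mp (abs_norm_sub_norm_le (f s) (f t))]
      show bb n k s * ‖f s‖ ≤ bb n k s * ‖f t‖ + bb n k s * ‖f s - f t‖
      nlinarith [bb_nonneg (n := n) (k := k) hs]
    -- ∫ bb ‖f t‖ = ‖∫ bb • f t‖ ... use: ∫ bb • (f t) and compare to ∫ bb • f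
    have h2 : (∫ s in (0:ℝ)..1, bb n k s * ‖f t‖) ≤
        ‖∫ s in (0:ℝ)..1, bb n k s • f s‖ + e := by
      have heq : (∫ s in (0:ℝ)..1, bb n k s • f t) =
          (∫ s in (0:ℝ)..1, bb n k s • f s) + ∫ s in (0:ℝ)..1, bb n k s • (f t - f s) := by
        rw [← intervalIntegral.integral_add (f := fun s => bb n k s • f s)
          (g := fun s => bb n k s • (f t - f s)) (hbfi n k)
          (contOn_intInt (((bb_cont n k).continuousOn).smul (continuousOn_const.sub hf)))]
        congr 1; funext s; rw [← smul_add]; congr 1; abel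
      have hnorm1 : (∫ s in (0:ℝ)..1, bb n k s * ‖f t‖) = ‖∫ s in (0:ℝ)..1, bb n k s • f t‖ := by
        rw [intervalIntegral.integral_smul_const, norm_smul]
        have hpos : 0 ≤ ∫ s in (0:ℝ)..1, bb n k s := by
          apply intervalIntegral.integral_nonneg zero_le_one
          intro s hs; exact bb_nonneg hs
        rw [Real.norm_eq_abs, abs_of_nonneg hpos, intervalIntegral.integral_mul_const]
      have hnorm2 : ‖∫ s in (0:ℝ)..1, bb n k s • (f t - f s)‖ ≤ e := by
        have := intervalIntegral.norm_integral_le_integral_norm (f := fun s => bb n k s • (f t - f s))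
          (a := 0) (b := 1) (μ := MeasureTheory.volume) zero_le_one
        refine this.trans (le_of_eq ?_)
        apply intervalIntegral.integral_congr
        intro s hs
        rw [huIcc] at hs
        dsimp only
        rw [norm_smul, Real.norm_eq_abs, abs_of_nonneg (bb_nonneg hs), norm_sub_rev]
      calc (∫ s in (0:ℝ)..1, bb n k s * ‖f t‖) = ‖∫ s in (0:ℝ)..1, bb n k s • f t‖ := hnorm1
        _ ≤ ‖∫ s in (0:ℝ)..1, bb n k s • f s‖ + ‖∫ s in (0:ℝ)..1, bb n k s • (f t - f s)‖ := by
            rw [heq]; exact norm_add_le _ _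
        _ ≤ _ := by linarith
    linarith
  -- now metric convergence
  rw [Metric.tendsto_atTop]
  intro ε hε
  -- uniform continuity
  have huc : UniformContinuousOn f (Icc 0 1) :=
    isCompact_Icc.uniformContinuousOn_of_continuous hf
  rw [Metric.uniformContinuousOn_iff] at huc
  obtain ⟨δ, hδ, hδ'⟩ := huc (ε/4) (by linarith)
  set c : ℝ := 2 * M / δ^2 with hc
  have hcnn : 0 ≤ c := by positivity
  obtain ⟨N₀, hN₀⟩ := exists_nat_gt (c / ε)
  set N : ℕ := max N₀ 1
  refine ⟨N, fun n hn => ?_⟩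
  have hn1 : 1 ≤ n := le_trans (le_max_right _ _) hn
  have hnR : (0:ℝ) < n := by exact_mod_cast hn1
  -- pointwise bound on modulus
  have hptw : ∀ (k : ℕ), k ≤ n → ∀ s ∈ Icc (0:ℝ) 1, ‖f s - f ((k:ℝ)/n)‖ ≤ ε/4 + c * (s - k/n)^2 := by
    intro k hkn s hs
    have hkn' : (k:ℝ)/n ∈ Icc (0:ℝ) 1 := by
      constructor
      · positivity
      · rw [div_le_one hnR]; exact_mod_cast hkn
    by_cases hcase : |s - (k:ℝ)/n| < δ
    · have := hδ' s hs ((k:ℝ)/n) hkn' (by rwa [Real.dist_eq])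
      rw [dist_eq_norm] at this
      nlinarith [sq_nonneg (s - (k:ℝ)/n)]
    · push_neg at hcase
      have h2M : ‖f s - f ((k:ℝ)/n)‖ ≤ 2 * M :=
        (norm_sub_le _ _).trans (by linarith [hM s hs, hM _ hkn'])
      have hge : δ^2 ≤ (s - (k:ℝ)/n)^2 := by nlinarith [abs_nonneg (s - (k:ℝ)/n), sq_abs (s - (k:ℝ)/n)]
      have : 2 * M ≤ c * (s - k/n)^2 := by
        rw [hc, div_mul_eq_mul_div, le_div_iff₀ (by positivity)]
        nlinarith
      linarith
  -- the g bound
  have hg : ∀ s ∈ Icc (0:ℝ) 1,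
      ∑ k ∈ Finset.range (n+1), bb n k s * ‖f s - f ((k:ℝ)/n)‖ ≤ ε/4 + c / (4*n) := by
    intro s hs
    have step1 : ∑ k ∈ Finset.range (n+1), bb n k s * ‖f s - f ((k:ℝ)/n)‖ ≤
        ∑ k ∈ Finset.range (n+1), bb n k s * (ε/4 + c * (s - k/n)^2) := by
      apply Finset.sum_le_sum
      intro k hk
      have hkn : k ≤ n := Nat.lt_succ_iff.mp (Finset.mem_range.mp hk)
      exact mul_le_mul_of_nonneg_left (hptw k hkn s hs) (bb_nonneg hs)
    have step2 : ∑ k ∈ Finset.range (n+1), bb n k s * (ε/4 + c * (s - k/n)^2) =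
        ε/4 + c * (s * (1-s) / n) := by
      have hexp : ∀ k ∈ Finset.range (n+1), bb n k s * (ε/4 + c * (s - k/n)^2) =
          (ε/4) * bb n k s + c * (bb n k s * (s - k/n)^2) := by
        intro k _; ring
      rw [Finset.sum_congr rfl hexp, Finset.sum_add_distrib, ← Finset.mul_sum, ← Finset.mul_sum,
        sum_bb, var_bb' hn1]
      ring
    have h14 : s * (1-s) ≤ 1/4 := by nlinarith [sq_nonneg (s - 1/2)]
    have step3 : c * (s * (1-s) / n) ≤ c / (4*n) := by
      calc c * (s * (1-s) / n) ≤ c * ((1/4) / n) := by gcongr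
        _ = c / (4*n) := by ring
    linarith
  -- assemble
  have hkmem : ∀ k : ℕ, k ≤ n → (k:ℝ)/n ∈ Icc (0:ℝ) 1 := by
    intro k hkn
    exact ⟨by positivity, by rw [div_le_one hnR]; exact_mod_cast hkn⟩
  set S : ℝ := ∑ k ∈ Finset.range (n+1), ‖∫ s in (0:ℝ)..1, bb n k s • f s‖ with hS
  set I : ℝ := ∫ s in (0:ℝ)..1, ‖f s‖ with hI
  have hSle : S ≤ I := by
    have hterm : ∀ k ∈ Finset.range (n+1), ‖∫ s in (0:ℝ)..1, bb n k s • f s‖ ≤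
        ∫ s in (0:ℝ)..1, bb n k s * ‖f s‖ := by
      intro k _
      refine (intervalIntegral.norm_integral_le_integral_norm zero_le_one).trans (le_of_eq ?_)
      apply intervalIntegral.integral_congr
      intro s hs
      rw [huIcc] at hs
      dsimp only
      rw [norm_smul, Real.norm_eq_abs, abs_of_nonneg (bb_nonneg hs)]
    calc S ≤ ∑ k ∈ Finset.range (n+1), ∫ s in (0:ℝ)..1, bb n k s * ‖f s‖ :=
        Finset.sum_le_sum hterm
      _ = I := hIsum n
  have hEsum : ∑ k ∈ Finset.range (n+1), (∫ s in (0:ℝ)..1, bb n k s * ‖f s - f ((k:ℝ)/n)‖) ≤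
      ε/4 + c/(4*n) := by
    have hik : ∀ k ∈ Finset.range (n+1),
        IntervalIntegrable (fun s => bb n k s * ‖f s - f ((k:ℝ)/n)‖) MeasureTheory.volume 0 1 :=
      fun k hk => hbdfi n k _ (hkmem k (Nat.lt_succ_iff.mp (Finset.mem_range.mp hk)))
    rw [← intervalIntegral.integral_finset_sum hik]
    have hgi : IntervalIntegrable
        (fun s => ∑ k ∈ Finset.range (n+1), bb n k s * ‖f s - f ((k:ℝ)/n)‖)
        MeasureTheory.volume 0 1 := by
      have h := IntervalIntegrable.sum (Finset.range (n+1)) hik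
      have heq : (∑ i ∈ Finset.range (n+1), fun s => bb n i s * ‖f s - f ((i:ℝ)/n)‖) =
          (fun s => ∑ k ∈ Finset.range (n+1), bb n k s * ‖f s - f ((k:ℝ)/n)‖) := by
        funext s; simp [Finset.sum_apply]
      rwa [heq] at h
    calc (∫ s in (0:ℝ)..1, ∑ k ∈ Finset.range (n+1), bb n k s * ‖f s - f ((k:ℝ)/n)‖) ≤
        ∫ _ in (0:ℝ)..1, (ε/4 + c/(4*(n:ℝ))) := by
          apply intervalIntegral.integral_mono_on zero_le_one hgi intervalIntegrable_const
          exact hg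
      _ = ε/4 + c/(4*n) := by simp
  have hdiff : I - S ≤ 2 * (ε/4 + c/(4*n)) := by
    have h1 : I - S = ∑ k ∈ Finset.range (n+1),
        ((∫ s in (0:ℝ)..1, bb n k s * ‖f s‖) - ‖∫ s in (0:ℝ)..1, bb n k s • f s‖) := by
      rw [Finset.sum_sub_distrib, hIsum n]
    have h2 : ∑ k ∈ Finset.range (n+1),
        ((∫ s in (0:ℝ)..1, bb n k s * ‖f s‖) - ‖∫ s in (0:ℝ)..1, bb n k s • f s‖) ≤
        ∑ k ∈ Finset.range (n+1), 2 * ∫ s in (0:ℝ)..1, bb n k s * ‖f s - f ((k:ℝ)/n)‖ := by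
      apply Finset.sum_le_sum
      intro k hk
      exact key n k (Nat.lt_succ_iff.mp (Finset.mem_range.mp hk))
    rw [h1]
    refine h2.trans ?_
    rw [← Finset.mul_sum]
    linarith
  have hcN : c < n * ε := by
    have hN0n : (N₀ : ℝ) ≤ n := by
      exact_mod_cast le_trans (le_max_left _ _) hn
    have : c < N₀ * ε := by
      rw [div_lt_iff₀ hε] at hN₀; linarith
    nlinarith
  have hcn : c/(4*n) < ε/4 := by
    rw [div_lt_div_iff₀ (by positivity) (by norm_num)]
    nlinarith
  rw [Real.dist_eq, abs_of_nonpos (by linarith)]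
  linarith

end Main

theorem stmt_18 (m : ℕ) (γ γ' : ℝ → EuclideanSpace ℝ (Fin m))
    (hγ : ∀ s ∈ Set.Icc (0:ℝ) 1, HasDerivAt γ (γ' s) s)
    (hγ' : ContinuousOn γ' (Set.Icc (0:ℝ) 1))
    (L : ℕ → ℕ → EuclideanSpace ℝ (Fin m))
    (hL : ∀ k l : ℕ, ∀ j : Fin m,
      L k l j = ∫ s in (0:ℝ)..1, s ^ k * (1 - s) ^ l / (k.factorial * l.factorial) * γ' s j) :
    Filter.limsup (fun n : ℕ => (n.factorial : ℝ) *
        ∑ k ∈ Finset.Icc 1 n, ‖L k (n - k)‖)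
      Filter.atTop = ∫ s in (0:ℝ)..1, ‖γ' s‖ := by
  have huIcc : uIcc (0:ℝ) 1 = Icc 0 1 := uIcc_of_le zero_le_one
  -- L in vector form
  have hLL : ∀ k l : ℕ, L k l = ∫ s in (0:ℝ)..1,
      (s ^ k * (1 - s) ^ l / (k.factorial * l.factorial : ℝ)) • γ' s := by
    intro k l
    have hcont : ContinuousOn
        (fun s => (s ^ k * (1 - s) ^ l / (k.factorial * l.factorial : ℝ)) • γ' s) (Icc 0 1) := by
      apply ContinuousOn.smul (f := fun s => s ^ k * (1 - s) ^ l / (k.factorial * l.factorial : ℝ))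
        (g := γ') _ hγ'
      fun_prop
    have hInt := contOn_intInt hcont
    ext j
    calc L k l j = ∫ s in (0:ℝ)..1, s ^ k * (1 - s) ^ l / (k.factorial * l.factorial) * γ' s j :=
        hL k l j
      _ = ∫ s in (0:ℝ)..1, EuclideanSpace.proj j
            ((s ^ k * (1 - s) ^ l / (k.factorial * l.factorial : ℝ)) • γ' s) := by
          apply intervalIntegral.integral_congr
          intro s _
          simp [smul_eq_mul]
      _ = EuclideanSpace.proj j (∫ s in (0:ℝ)..1,
            (s ^ k * (1 - s) ^ l / (k.factorial * l.factorial : ℝ)) • γ' s) :=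
          (EuclideanSpace.proj j (𝕜 := ℝ)).intervalIntegral_comp_comm hInt
      _ = _ := by simp
  -- scaled terms are Bernstein integrals
  have hmain : ∀ n : ℕ, ∀ k ∈ Finset.Icc 1 n, (n.factorial : ℝ) * ‖L k (n - k)‖ =
      ‖∫ s in (0:ℝ)..1, bb n k s • γ' s‖ := by
    intro n k hk
    obtain ⟨_, hkn⟩ := Finset.mem_Icc.mp hk
    rw [hLL k (n - k)]
    rw [← abs_of_nonneg (a := (n.factorial : ℝ)) (by positivity), ← Real.norm_eq_abs, ← norm_smul]
    rw [← intervalIntegral.integral_smul]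
    congr 1
    apply intervalIntegral.integral_congr
    intro s _
    dsimp only
    rw [smul_smul]
    congr 1
    have hch : (n.choose k : ℝ) = (n.factorial : ℝ) / (k.factorial * (n - k).factorial) :=
      Nat.cast_choose ℝ hkn
    have hk0 : (k.factorial : ℝ) ≠ 0 := by exact_mod_cast k.factorial_ne_zero
    have hl0 : ((n - k).factorial : ℝ) ≠ 0 := by exact_mod_cast (n - k).factorial_ne_zero
    unfold bb
    rw [hch]
    field_simp
  -- rearrange sums
  have hfun : ∀ n : ℕ, (n.factorial : ℝ) * ∑ k ∈ Finset.Icc 1 n, ‖L k (n - k)‖ =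
      (∑ k ∈ Finset.range (n+1), ‖∫ s in (0:ℝ)..1, bb n k s • γ' s‖) -
        ‖∫ s in (0:ℝ)..1, bb n 0 s • γ' s‖ := by
    intro n
    rw [Finset.mul_sum, Finset.sum_congr rfl (hmain n)]
    have hins : Finset.range (n+1) = insert 0 (Finset.Icc 1 n) := by
      ext x; simp [Finset.mem_range, Finset.mem_Icc, Nat.lt_succ_iff]; omega
    rw [hins, Finset.sum_insert (by simp)]
    ring
  -- tail term tends to zero
  obtain ⟨M₀, hM₀⟩ := isCompact_Icc.exists_bound_of_continuousOn hγ'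
  set M : ℝ := max M₀ 0 with hMdef
  have hM : ∀ x ∈ Icc (0:ℝ) 1, ‖γ' x‖ ≤ M := fun x hx => (hM₀ x hx).trans (le_max_left _ _)
  have hMnn : 0 ≤ M := le_max_right _ _
  have htail : ∀ n : ℕ, ‖∫ s in (0:ℝ)..1, bb n 0 s • γ' s‖ ≤ M / (n + 1) := by
    intro n
    have h1 : ‖∫ s in (0:ℝ)..1, bb n 0 s • γ' s‖ ≤ ∫ s in (0:ℝ)..1, (1 - s)^n * M := by
      refine (intervalIntegral.norm_integral_le_integral_norm zero_le_one).trans ?_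
      apply intervalIntegral.integral_mono_on zero_le_one
        (contOn_intInt (((bb_cont n 0).continuousOn).smul hγ').norm)
        (contOn_intInt (by fun_prop))
      intro s hs
      show ‖bb n 0 s • γ' s‖ ≤ (1 - s) ^ n * M
      rw [norm_smul, Real.norm_eq_abs, abs_of_nonneg (bb_nonneg hs)]
      have hbb : bb n 0 s = (1 - s)^n := by unfold bb; simp
      rw [hbb]
      have : (0:ℝ) ≤ (1 - s)^n := by
        have : (0:ℝ) ≤ 1 - s := by linarith [hs.2]
        positivity
      nlinarith [hM s hs, norm_nonneg (γ' s)]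
    have h2 : (∫ s in (0:ℝ)..1, (1 - s)^n * M) = M / (n + 1) := by
      rw [intervalIntegral.integral_mul_const]
      have h3 : (∫ s in (0:ℝ)..1, (1 - s)^n) = ∫ s in (0:ℝ)..1, s^n := by
        have := intervalIntegral.integral_comp_sub_left (a := (0:ℝ)) (b := 1)
          (fun x => x^n) 1
        simpa using this
      rw [h3, integral_pow]
      field_simp
      simp
    linarith
  have htail0 : Tendsto (fun n : ℕ => ‖∫ s in (0:ℝ)..1, bb n 0 s • γ' s‖) atTop (nhds 0) := by
    apply squeeze_zero (fun n => norm_nonneg _) htail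
    have : Tendsto (fun n : ℕ => M * (1 / (n + 1))) atTop (nhds (M * 0)) :=
      tendsto_const_nhds.mul tendsto_one_div_add_atTop_nhds_zero_nat
    simpa [div_eq_mul_inv] using this
  have hT : Tendsto (fun n : ℕ => (n.factorial : ℝ) * ∑ k ∈ Finset.Icc 1 n, ‖L k (n - k)‖)
      atTop (nhds (∫ s in (0:ℝ)..1, ‖γ' s‖)) := by
    have h := (bern_tendsto γ' hγ').sub htail0
    rw [sub_zero] at h
    exact h.congr (fun n => (hfun n).symm)
  exact hT.limsup_eq
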